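/- arXiv:1311.7034 — 6 statements merged into one kernel-verified Lean document; each statement's English description precedes it below -/
import Mathlib

section
/- With g, φ, c as above, let u : [0,∞) → (0,∞) be continuous non-increasing with φ(x) = x·u(x), and define v = u ∘ g⁻¹ and ψ(x) = x·v(x). Then for all x > 0, ψ(x) = φ(g⁻¹(x))/(1 − c·φ(g⁻¹(x))). Consequently ψ is increasing, nonnegative, and ψ(x) → φ_∞/(1 − c·φ_∞) as x → ∞. -/
open Filter

/-- with v = u ∘ g⁻¹ and ψ(x) = x·v(x), for x > 0 one has
ψ(x) = φ(g⁻¹(x))/(1 − c·φ(g⁻¹(x))); ψ is increasing, nonnegative, and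
ψ(x) → φ_∞/(1 − c·φ_∞) as x → ∞. -/
theorem stmt_1 (c φinf : ℝ) (u φ g ginv v ψ : ℝ → ℝ)
    (hc0 : 0 < c) (hc1 : c < 1)
    (hu : ContinuousOn u (Set.Ici 0)) (hupos : ∀ x ∈ Set.Ici (0:ℝ), 0 < u x)
    (humono : AntitoneOn u (Set.Ici 0))
    (hφ : ∀ x ∈ Set.Ici (0:ℝ), φ x = x * u x)
    (hφmono : StrictMonoOn φ (Set.Ici 0))
    (hφlim : Tendsto φ atTop (nhds φinf)) (hφinf : 1 < φinf)
    (hcφ : c * φinf < 1)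
    (hgdef : ∀ x ∈ Set.Ici (0:ℝ), g x = x / (1 - c * φ x))
    (hgbij : Set.BijOn g (Set.Ici 0) (Set.Ici 0))
    (hginv : ∀ x ∈ Set.Ici (0:ℝ), g (ginv x) = x ∧ ginv x ∈ Set.Ici (0:ℝ))
    (hv : ∀ x ∈ Set.Ici (0:ℝ), v x = u (ginv x))
    (hψ : ∀ x ∈ Set.Ici (0:ℝ), ψ x = x * v x) :
    (∀ x > (0:ℝ), ψ x = φ (ginv x) / (1 - c * φ (ginv x))) ∧
      StrictMonoOn ψ (Set.Ici 0) ∧ (∀ x ∈ Set.Ici (0:ℝ), 0 ≤ ψ x) ∧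
      Tendsto ψ atTop (nhds (φinf / (1 - c * φinf))) := by
  -- φ x < φinf for x ≥ 0
  have hφlt : ∀ x ∈ Set.Ici (0:ℝ), φ x < φinf := by
    intro x hx
    have h1 : φ (x + 1) ≤ φinf := by
      apply ge_of_tendsto hφlim
      filter_upwards [eventually_ge_atTop (x + 2)] with t ht
      exact (hφmono (by simp at hx ⊢; linarith) (by simp at hx ⊢; linarith)
        (by linarith)).le
    have h2 : φ x < φ (x + 1) :=
      hφmono hx (by simp at hx ⊢; linarith) (by linarith)
    linarith
  have hden : ∀ x ∈ Set.Ici (0:ℝ), 0 < 1 - c * φ x := by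
    intro x hx
    have := hφlt x hx
    nlinarith
  -- g strictly monotone
  have hgmono : StrictMonoOn g (Set.Ici 0) := by
    intro a ha b hb hab
    rw [hgdef a ha, hgdef b hb]
    have hda := hden a ha; have hdb := hden b hb
    have hφab : φ a < φ b := hφmono ha hb hab
    rw [div_lt_div_iff₀ hda hdb]
    have ha' : (0:ℝ) ≤ a := ha
    nlinarith [mul_nonneg (mul_nonneg ha' hc0.le) (sub_nonneg.2 hφab.le)]
  -- ginv strictly monotone
  have hginvmono : StrictMonoOn ginv (Set.Ici 0) := by
    intro a ha b hb hab
    obtain ⟨hga, hia⟩ := hginv a ha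
    obtain ⟨hgb, hib⟩ := hginv b hb
    by_contra h
    push_neg at h
    have : g (ginv b) ≤ g (ginv a) := by
      rcases h.lt_or_eq with h' | h'
      · exact (hgmono hib hia h').le
      · rw [h']
    rw [hga, hgb] at this; linarith
  -- key formula
  have hkey : ∀ x ∈ Set.Ici (0:ℝ), ψ x = φ (ginv x) / (1 - c * φ (ginv x)) := by
    intro x hx
    obtain ⟨hg1, hi⟩ := hginv x hx
    rw [hψ x hx, hv x hx]
    set y := ginv x with hy
    have hd := hden y hi
    have hxe : x = y / (1 - c * φ y) := by rw [← hgdef y hi]; exact hg1.symm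
    rw [hxe, hφ y hi]
    field_simp
  refine ⟨fun x hx => hkey x hx.le, ?_, ?_, ?_⟩
  · -- strict monotonicity of ψ
    intro a ha b hb hab
    rw [hkey a ha, hkey b hb]
    obtain ⟨hga, hia⟩ := hginv a ha
    obtain ⟨hgb, hib⟩ := hginv b hb
    have hda := hden _ hia; have hdb := hden _ hib
    have h1 : φ (ginv a) < φ (ginv b) := hφmono hia hib (hginvmono ha hb hab)
    rw [div_lt_div_iff₀ hda hdb]
    nlinarith
  · intro x hx
    rw [hψ x hx, hv x hx]
    exact mul_nonneg hx (hupos _ (hginv x hx).2).le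
  · -- limit
    have hginvtop : Tendsto ginv atTop atTop := by
      rw [tendsto_atTop_atTop]
      intro b
      rcases le_or_gt b 0 with hb | hb
      · exact ⟨0, fun a ha => hb.trans (hginv a ha).2⟩
      · refine ⟨g b, fun a ha => ?_⟩
        have hb' : (0:ℝ) ≤ b := hb.le
        have hgb0 : (0:ℝ) ≤ g b := hgbij.mapsTo hb'
        have ha0 : (0:ℝ) ≤ a := hgb0.trans ha
        obtain ⟨hga, hia⟩ := hginv a ha0
        by_contra h
        push_neg at h
        have := hgmono hia hb' h
        rw [hga] at this; linarith
    have hdinf : (1 - c * φinf) ≠ 0 := by nlinarith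
    have hF : Tendsto (fun t => t / (1 - c * t)) (nhds φinf)
        (nhds (φinf / (1 - c * φinf))) :=
      Tendsto.div tendsto_id (tendsto_const_nhds.sub (tendsto_id.const_mul c)) hdinf
    have hcomp := hF.comp (hφlim.comp hginvtop)
    apply Tendsto.congr' _ hcomp
    filter_upwards [eventually_ge_atTop (0:ℝ)] with x hx
    exact (hkey x hx).symm
end

section
/- Let v ∈ ℂ^N, let A and B be N×N Hermitian nonnegative definite matrices, and let x > 0. Then |tr(B·(A + v·v* + x·I_N)⁻¹) − tr(B·(A + x·I_N)⁻¹)| ≤ ‖B‖ / x, where ‖B‖ is the spectral (operator) norm of B. -/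
open Matrix
open scoped ComplexOrder

set_option linter.unusedSectionVars false

section helpers
variable {n : Type*} [Fintype n] [DecidableEq n]

lemma vmv_mulVec (a b y : n → ℂ) : vecMulVec a b *ᵥ y = (b ⬝ᵥ y) • a := by
  ext i
  simp [mulVec, vecMulVec_apply, dotProduct, Finset.sum_mul, Finset.mul_sum, mul_comm, mul_assoc,
    mul_left_comm]

lemma mul_vmv (M : Matrix n n ℂ) (a b : n → ℂ) :
    M * vecMulVec a b = vecMulVec (M *ᵥ a) b := by
  ext i j
  simp [mul_apply, vecMulVec_apply, mulVec, dotProduct, Finset.sum_mul, mul_assoc]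

lemma vmv_mul (M : Matrix n n ℂ) (a b : n → ℂ) :
    vecMulVec a b * M = vecMulVec a (b ᵥ* M) := by
  ext i j
  simp [mul_apply, vecMulVec_apply, vecMul, dotProduct, Finset.mul_sum, mul_assoc]

lemma smul_vmv (c : ℂ) (a b : n → ℂ) : vecMulVec (c • a) b = c • vecMulVec a b := by
  ext i j; simp [vecMulVec_apply, mul_assoc]

lemma trace_mul_vmv (B : Matrix n n ℂ) (a b : n → ℂ) :
    (B * vecMulVec a b).trace = b ⬝ᵥ (B *ᵥ a) := by
  rw [trace_mul_comm, vmv_mul]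
  simp [trace, diag, vecMulVec_apply, dotProduct, vecMul, mulVec, Finset.mul_sum, mul_comm,
    mul_left_comm]
  rw [Finset.sum_comm]

lemma psd_vmv (v : n → ℂ) : (vecMulVec v (star v)).PosSemidef := by
  refine PosSemidef.of_dotProduct_mulVec_nonneg ?_ ?_
  · ext i j
    simp [conjTranspose_apply, vecMulVec_apply, mul_comm]
  · intro y
    rw [vmv_mulVec, dotProduct_smul]
    have h : star y ⬝ᵥ v = star (star v ⬝ᵥ y) := by
      simp [dotProduct, Finset.sum_comm, mul_comm]
    rw [smul_eq_mul, h]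
    exact mul_star_self_nonneg _
end helpers

/-- rank-one perturbation lemma:
|tr(B(A + vv* + xI)⁻¹) − tr(B(A + xI)⁻¹)| ≤ ‖B‖/x, ‖B‖ the spectral norm. -/
theorem stmt_6 (N : ℕ) (A B : Matrix (Fin N) (Fin N) ℂ) (v : Fin N → ℂ) (x : ℝ)
    (hx : 0 < x) (hA : A.PosSemidef) (hB : B.PosSemidef) :
    ‖(B * (A + vecMulVec v (star v) + (x:ℂ) • (1 : Matrix (Fin N) (Fin N) ℂ))⁻¹).trace
        - (B * (A + (x:ℂ) • (1 : Matrix (Fin N) (Fin N) ℂ))⁻¹).trace‖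
      ≤ ‖Matrix.toEuclideanCLM (𝕜 := ℂ) B‖ / x := by
  classical
  set T := Matrix.toEuclideanCLM (𝕜 := ℂ) B with hT
  set D : Matrix (Fin N) (Fin N) ℂ := A + vecMulVec v (star v) + (x:ℂ) • 1 with hDdef
  set C : Matrix (Fin N) (Fin N) ℂ := A + (x:ℂ) • 1 with hCdef
  have hsm : ((x:ℂ) • (1 : Matrix (Fin N) (Fin N) ℂ)).PosDef := by
    rw [smul_one_eq_diagonal]
    exact .diagonal (fun _ => by exact_mod_cast hx)
  have hC : C.PosDef := Matrix.PosDef.posSemidef_add hA hsm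
  have hD : D.PosDef := Matrix.PosDef.posSemidef_add (hA.add (psd_vmv v)) hsm
  have hCu : IsUnit C.det := isUnit_iff_ne_zero.mpr hC.det_pos.ne'
  have hDu : IsUnit D.det := isUnit_iff_ne_zero.mpr hD.det_pos.ne'
  set w : Fin N → ℂ := C⁻¹ *ᵥ v with hw
  have hCw : C *ᵥ w = v := by
    rw [hw, mulVec_mulVec, mul_nonsing_inv _ hCu, one_mulVec]
  set α : ℂ := star v ⬝ᵥ w with hαdef
  have hα0 : (0:ℂ) ≤ α := by rw [hαdef, hw]; exact hC.inv.posSemidef.dotProduct_mulVec_nonneg v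
  set a : ℝ := α.re with hadef
  have ha0 : 0 ≤ a := by rw [Complex.le_def] at hα0; simpa [hadef] using hα0.1
  have hαre : α = (a:ℂ) := by
    rw [Complex.le_def] at hα0
    exact Complex.ext rfl (by simpa using hα0.2.symm)
  have h1a : (0:ℝ) < 1 + a := by linarith
  have h1α : (1 + α) ≠ 0 := by
    rw [hαre]
    exact_mod_cast h1a.ne'
  have hDC : D = C + vecMulVec v (star v) := by rw [hDdef, hCdef]; abel
  have hDw : D *ᵥ w = (1 + α) • v := by
    rw [hDC, add_mulVec, hCw, vmv_mulVec, ← hαdef, add_smul, one_smul]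
  have hDiv : D⁻¹ *ᵥ v = (1 + α)⁻¹ • w := by
    have h1 : D⁻¹ *ᵥ (D *ᵥ w) = w := by
      rw [mulVec_mulVec, nonsing_inv_mul _ hDu, one_mulVec]
    rw [hDw, mulVec_smul] at h1
    rw [← h1, smul_smul, inv_mul_cancel₀ h1α, one_smul]
  have hsw : star v ᵥ* C⁻¹ = star w := by
    rw [hw, star_mulVec, hC.inv.isHermitian]
  have hkey : D⁻¹ - C⁻¹ = -((1 + α)⁻¹ • vecMulVec w (star w)) := by
    have h2 : D⁻¹ * (C - D) * C⁻¹ = D⁻¹ - C⁻¹ := by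
      rw [Matrix.mul_sub, Matrix.sub_mul, Matrix.mul_assoc, mul_nonsing_inv _ hCu,
        Matrix.mul_one, nonsing_inv_mul _ hDu, Matrix.one_mul]
    have h3 : C - D = -(vecMulVec v (star v)) := by rw [hDC]; abel
    calc D⁻¹ - C⁻¹ = D⁻¹ * (C - D) * C⁻¹ := h2.symm
      _ = -(D⁻¹ * (vecMulVec v (star v) * C⁻¹)) := by
          rw [h3, Matrix.mul_neg, Matrix.neg_mul, Matrix.mul_assoc]
      _ = -((1 + α)⁻¹ • vecMulVec w (star w)) := by
          rw [vmv_mul, hsw, mul_vmv, hDiv, smul_vmv]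
  set β : ℂ := star w ⬝ᵥ (B *ᵥ w) with hβdef
  have htr : (B * D⁻¹).trace - (B * C⁻¹).trace = -((1 + α)⁻¹ * β) := by
    rw [← trace_sub, ← Matrix.mul_sub, hkey, Matrix.mul_neg, trace_neg, Matrix.mul_smul,
      trace_smul, trace_mul_vmv, smul_eq_mul, ← hβdef]
  rw [htr]
  set w' : EuclideanSpace ℂ (Fin N) := (WithLp.equiv 2 _).symm w with hw'
  have hβinner : β = @inner ℂ _ _ w' (T w') := by
    rw [hβdef, dotProduct_comm]
    rfl
  have hβbound : ‖β‖ ≤ ‖T‖ * ‖w'‖ ^ 2 := by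
    rw [hβinner]
    calc ‖@inner ℂ _ _ w' (T w')‖ ≤ ‖w'‖ * ‖T w'‖ := norm_inner_le_norm _ _
      _ ≤ ‖w'‖ * (‖T‖ * ‖w'‖) := by
          gcongr
          exact T.le_opNorm _
      _ = ‖T‖ * ‖w'‖ ^ 2 := by ring
  have hγ : (0:ℂ) ≤ star w ⬝ᵥ (A *ᵥ w) := hA.dotProduct_mulVec_nonneg w
  have hs : star w ⬝ᵥ w = ((‖w'‖ ^ 2 : ℝ) : ℂ) := by
    have h := inner_self_eq_norm_sq_to_K (𝕜 := ℂ) w'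
    rw [EuclideanSpace.inner_eq_star_dotProduct] at h
    have he : WithLp.equiv 2 _ w' = w := by rw [hw']; exact Equiv.apply_symm_apply _ _
    rw [show w'.ofLp = w from he, dotProduct_comm] at h
    rw [h]
    norm_cast
  have hα_expand : α = star w ⬝ᵥ (A *ᵥ w) + (x:ℂ) * (star w ⬝ᵥ w) := by
    conv_lhs => rw [hαdef, ← hCw]
    rw [star_mulVec, hC.isHermitian, ← dotProduct_mulVec, hCdef, add_mulVec, smul_mulVec,
      one_mulVec, dotProduct_add, dotProduct_smul, smul_eq_mul]
  have hxw : x * ‖w'‖ ^ 2 ≤ a := by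
    have h := congrArg Complex.re hα_expand
    rw [hs] at h
    simp only [Complex.add_re, Complex.mul_re, Complex.ofReal_re, Complex.ofReal_im,
      mul_zero, sub_zero, ← hadef] at h
    have hγre : 0 ≤ (star w ⬝ᵥ (A *ᵥ w)).re := by
      rw [Complex.le_def] at hγ
      simpa using hγ.1
    linarith
  have habs : ‖1 + α‖ = 1 + a := by
    rw [hαre]
    rw [show (1 : ℂ) + (a:ℂ) = ((1 + a : ℝ) : ℂ) by push_cast; ring, Complex.norm_real, Real.norm_eq_abs,
      abs_of_pos h1a]
  have hTnn : (0:ℝ) ≤ ‖T‖ := norm_nonneg _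
  calc ‖-((1 + α)⁻¹ * β)‖ = (1 + a)⁻¹ * ‖β‖ := by
        rw [norm_neg, norm_mul, norm_inv, habs]
    _ ≤ (1 + a)⁻¹ * (‖T‖ * ‖w'‖ ^ 2) := by
        gcongr
    _ ≤ (1 + a)⁻¹ * (‖T‖ * (a / x)) := by
        gcongr
        rw [le_div_iff₀ hx]
        linarith [hxw]
    _ = (‖T‖ / x) * (a / (1 + a)) := by
        ring
    _ ≤ (‖T‖ / x) * 1 := by
        gcongr
        rw [div_le_one h1a]
        linarith
    _ = ‖T‖ / x := mul_one _
end

section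
/- Let τ₁,…,τₙ ≥ 0, c > 0, and let ψ : [0,∞) → [0,∞) be increasing, continuous, and bounded with ψ(0) = 0, obtained as ψ(x) = x·v(x) with v positive non-increasing. Define h : [0,∞) → (0,∞) by h(γ) = ( (1/n)·Σᵢ τᵢ·v(τᵢ·γ)/(1 + c·τᵢ·v(τᵢ·γ)·γ) )⁻¹ (with h(0) = (v(0)·(1/n)Σᵢτᵢ)⁻¹, assuming some τᵢ > 0). Then h is positive, non-decreasing (γ ≥ γ′ ⟹ h(γ) ≥ h(γ′)), and scalable: for every α > 1 and γ ≥ 0 with not all τᵢ = 0, α·h(γ) > h(α·γ). -/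
open Finset

/-- the interference function
h(γ) = ((1/n)Σᵢ τᵢ v(τᵢγ)/(1 + c τᵢ v(τᵢγ) γ))⁻¹ is positive, non-decreasing
and scalable (α·h(γ) > h(α·γ) for α > 1). -/
theorem stmt_10 (n : ℕ) (hn : 0 < n) (τ : Fin n → ℝ) (hτ : ∀ i, 0 ≤ τ i)
    (hτne : ∃ i, 0 < τ i) (c : ℝ) (hc : 0 < c)
    (v : ℝ → ℝ) (hv : ∀ x ∈ Set.Ici (0:ℝ), 0 < v x)
    (hvmono : AntitoneOn v (Set.Ici 0)) (hvcont : ContinuousOn v (Set.Ici 0))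
    (hψmono : StrictMonoOn (fun x => x * v x) (Set.Ici 0))
    (hψbdd : BddAbove ((fun x => x * v x) '' Set.Ici 0))
    (h : ℝ → ℝ)
    (hh : ∀ γ ∈ Set.Ici (0:ℝ),
      h γ = ((1 / (n:ℝ)) * ∑ i, τ i * v (τ i * γ) / (1 + c * τ i * v (τ i * γ) * γ))⁻¹) :
    (∀ γ ∈ Set.Ici (0:ℝ), 0 < h γ) ∧
      (∀ γ' ∈ Set.Ici (0:ℝ), ∀ γ ∈ Set.Ici (0:ℝ), γ' ≤ γ → h γ' ≤ h γ) ∧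
      (∀ α > (1:ℝ), ∀ γ ∈ Set.Ici (0:ℝ), h (α * γ) < α * h γ) := by
  set F : ℝ → ℝ := fun γ => (1 / (n:ℝ)) * ∑ i, τ i * v (τ i * γ) / (1 + c * τ i * v (τ i * γ) * γ)
    with hF
  have hvpos : ∀ i (γ : ℝ), 0 ≤ γ → 0 < v (τ i * γ) := fun i γ hγ =>
    hv _ (mul_nonneg (hτ i) hγ)
  have hden : ∀ i (γ : ℝ), 0 ≤ γ → 0 < 1 + c * τ i * v (τ i * γ) * γ := by
    intro i γ hγ
    have h1 : 0 ≤ c * τ i * v (τ i * γ) * γ :=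
      mul_nonneg (mul_nonneg (mul_nonneg hc.le (hτ i)) (hvpos i γ hγ).le) hγ
    linarith
  have htermnn : ∀ i (γ : ℝ), 0 ≤ γ →
      0 ≤ τ i * v (τ i * γ) / (1 + c * τ i * v (τ i * γ) * γ) := fun i γ hγ =>
    div_nonneg (mul_nonneg (hτ i) (hvpos i γ hγ).le) (hden i γ hγ).le
  have hFpos : ∀ γ : ℝ, 0 ≤ γ → 0 < F γ := by
    intro γ hγ
    obtain ⟨i₀, hi₀⟩ := hτne
    have hsum : 0 < ∑ i, τ i * v (τ i * γ) / (1 + c * τ i * v (τ i * γ) * γ) := by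
      refine Finset.sum_pos' (fun i _ => htermnn i γ hγ) ⟨i₀, Finset.mem_univ _, ?_⟩
      exact div_pos (mul_pos hi₀ (hvpos i₀ γ hγ)) (hden i₀ γ hγ)
    have hn' : (0:ℝ) < 1 / (n:ℝ) := by positivity
    exact mul_pos hn' hsum
  have hterm_mono : ∀ i (γ' γ : ℝ), 0 ≤ γ' → γ' ≤ γ →
      τ i * v (τ i * γ) / (1 + c * τ i * v (τ i * γ) * γ) ≤
      τ i * v (τ i * γ') / (1 + c * τ i * v (τ i * γ') * γ') := by
    intro i γ' γ hγ' hle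
    have hγ : 0 ≤ γ := le_trans hγ' hle
    rcases (hτ i).eq_or_lt with hτ0 | hτ0
    · simp [← hτ0]
    · have hm1 : τ i * γ' ∈ Set.Ici (0:ℝ) := mul_nonneg (hτ i) hγ'
      have hm2 : τ i * γ ∈ Set.Ici (0:ℝ) := mul_nonneg (hτ i) hγ
      have hτγle : τ i * γ' ≤ τ i * γ := mul_le_mul_of_nonneg_left hle (hτ i)
      have hab : τ i * v (τ i * γ) ≤ τ i * v (τ i * γ') :=
        mul_le_mul_of_nonneg_left (hvmono hm1 hm2 hτγle) (hτ i)
      have hψ : (τ i * γ') * v (τ i * γ') ≤ (τ i * γ) * v (τ i * γ) :=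
        hψmono.monotoneOn hm1 hm2 hτγle
      have hd : 1 + c * τ i * v (τ i * γ') * γ' ≤ 1 + c * τ i * v (τ i * γ) * γ := by
        nlinarith
      exact div_le_div₀ (mul_nonneg (hτ i) (hvpos i γ' hγ').le) hab (hden i γ' hγ') hd
  have hFmono : ∀ γ' γ : ℝ, 0 ≤ γ' → γ' ≤ γ → F γ ≤ F γ' := by
    intro γ' γ hγ' hle
    have hs : ∑ i, τ i * v (τ i * γ) / (1 + c * τ i * v (τ i * γ) * γ) ≤
        ∑ i, τ i * v (τ i * γ') / (1 + c * τ i * v (τ i * γ') * γ') :=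
      Finset.sum_le_sum fun i _ => hterm_mono i γ' γ hγ' hle
    have hn' : (0:ℝ) ≤ 1 / (n:ℝ) := by positivity
    exact mul_le_mul_of_nonneg_left hs hn'
  refine ⟨?_, ?_, ?_⟩
  · intro γ hγ
    rw [hh γ hγ]
    exact inv_pos.mpr (hFpos γ hγ)
  · intro γ' hγ' γ hγ hle
    rw [hh γ' hγ', hh γ hγ]
    exact inv_anti₀ (hFpos γ hγ) (hFmono γ' γ hγ' hle)
  · intro α hα γ hγ
    simp only [Set.mem_Ici] at hγ
    have hαγ : (0:ℝ) ≤ α * γ := mul_nonneg (by linarith) hγ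
    rw [hh (α * γ) hαγ, hh γ hγ]
    rcases hγ.eq_or_lt with h0 | h0
    · have hz : α * γ = γ := by rw [← h0, mul_zero]
      rw [hz]
      have hpos : 0 < (F γ)⁻¹ := inv_pos.mpr (hFpos γ hγ)
      nlinarith
    · -- strict termwise inequality for τ i > 0
      have hstrict : ∀ i, 0 < τ i →
          τ i * v (τ i * γ) / (1 + c * τ i * v (τ i * γ) * γ) <
          α * (τ i * v (τ i * (α * γ)) / (1 + c * τ i * v (τ i * (α * γ)) * (α * γ))) := by
        intro i hτ0
        have hm1 : τ i * γ ∈ Set.Ici (0:ℝ) := mul_nonneg (hτ i) hγ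
        have hm2 : τ i * (α * γ) ∈ Set.Ici (0:ℝ) := mul_nonneg (hτ i) hαγ
        have hτγlt : τ i * γ < τ i * (α * γ) := by nlinarith [mul_pos (mul_pos hτ0 h0) (sub_pos.mpr hα)]
        have hψ : (τ i * γ) * v (τ i * γ) < (τ i * (α * γ)) * v (τ i * (α * γ)) :=
          hψmono hm1 hm2 hτγlt
        have hab : τ i * v (τ i * γ) < α * (τ i * v (τ i * (α * γ))) := by
          have h2 : τ i * v (τ i * γ) * γ < α * (τ i * v (τ i * (α * γ))) * γ := by
            nlinarith [hψ]
          exact lt_of_mul_lt_mul_right h2 hγ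
        have hd1 := hden i γ hγ
        have hd2 := hden i (α * γ) hαγ
        rw [mul_div_assoc' α, div_lt_div_iff₀ hd1 hd2]
        nlinarith [hab]
      have hterm : ∀ i, τ i * v (τ i * γ) / (1 + c * τ i * v (τ i * γ) * γ) ≤
          α * (τ i * v (τ i * (α * γ)) / (1 + c * τ i * v (τ i * (α * γ)) * (α * γ))) := by
        intro i
        rcases (hτ i).eq_or_lt with hτ0 | hτ0
        · simp [← hτ0]
        · exact (hstrict i hτ0).le
      obtain ⟨i₀, hi₀⟩ := hτne
      have hsum : ∑ i, τ i * v (τ i * γ) / (1 + c * τ i * v (τ i * γ) * γ) <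
          ∑ i, α * (τ i * v (τ i * (α * γ)) / (1 + c * τ i * v (τ i * (α * γ)) * (α * γ))) :=
        Finset.sum_lt_sum (fun i _ => hterm i) ⟨i₀, Finset.mem_univ _, hstrict i₀ hi₀⟩
      have hn' : (0:ℝ) < 1 / (n:ℝ) := by positivity
      have key : F γ < α * F (α * γ) := by
        calc F γ = (1 / (n:ℝ)) * ∑ i, τ i * v (τ i * γ) / (1 + c * τ i * v (τ i * γ) * γ) := rfl
          _ < (1 / (n:ℝ)) *
              ∑ i, α * (τ i * v (τ i * (α * γ)) / (1 + c * τ i * v (τ i * (α * γ)) * (α * γ))) :=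
            mul_lt_mul_of_pos_left hsum hn'
          _ = α * F (α * γ) := by rw [← Finset.mul_sum, hF]; ring
      have hA := hFpos (α * γ) hαγ
      have hB := hFpos γ hγ
      rw [inv_eq_one_div, inv_eq_one_div, mul_one_div, div_lt_div_iff₀ hA hB]
      nlinarith [key]
end

section
/- Let h : [0,∞) → [0,∞) be continuous, positive, non-decreasing, and scalable (α·h(γ) > h(α·γ) for every α > 1 and γ ≥ 0 with h(γ) > 0), and suppose there exists γ₀ > 0 with h(γ₀) < γ₀ (feasibility). Then there exists a unique γ* > 0 with h(γ*) = γ*, and for any γ⁽⁰⁾ ≥ 0 the iterates γ⁽ᵗ⁺¹⁾ = h(γ⁽ᵗ⁾) converge to γ*. -/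
open Filter

private lemma aux_fix_pt (h : ℝ → ℝ) (hcont : ContinuousOn h (Set.Ici 0))
    (u : ℕ → ℝ) (hu : ∀ t, u (t+1) = h (u t)) (hnn : ∀ t, 0 ≤ u t)
    (L : ℝ) (hL : 0 ≤ L) (hlim : Tendsto u atTop (nhds L)) : h L = L := by
  have h1 : Tendsto u atTop (nhdsWithin L (Set.Ici 0)) :=
    tendsto_nhdsWithin_of_tendsto_nhds_of_eventually_within _ hlim (Eventually.of_forall hnn)
  have h2 : Tendsto (fun t => h (u t)) atTop (nhds (h L)) := (hcont L hL).tendsto.comp h1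
  have h3 : Tendsto (fun t => u (t+1)) atTop (nhds L) := hlim.comp (tendsto_add_atTop_nat 1)
  have heq : (fun t => u (t+1)) = fun t => h (u t) := funext hu
  rw [heq] at h3
  exact tendsto_nhds_unique h2 h3

/-- Yates: a continuous, positive, non-decreasing, scalable
function h with a feasible point has a unique positive fixed point, and the
fixed-point iteration converges to it from any nonnegative starting point. -/
theorem stmt_11 (h : ℝ → ℝ)
    (hcont : ContinuousOn h (Set.Ici 0))
    (hpos : ∀ γ ∈ Set.Ici (0:ℝ), 0 < h γ)
    (hmono : ∀ γ' ∈ Set.Ici (0:ℝ), ∀ γ ∈ Set.Ici (0:ℝ), γ' ≤ γ → h γ' ≤ h γ)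
    (hscal : ∀ α > (1:ℝ), ∀ γ ∈ Set.Ici (0:ℝ), 0 < h γ → h (α * γ) < α * h γ)
    (hfeas : ∃ γ₀ > (0:ℝ), h γ₀ < γ₀) :
    ∃ γs > (0:ℝ), h γs = γs ∧ (∀ γ' > (0:ℝ), h γ' = γ' → γ' = γs) ∧
      ∀ γ₀ ∈ Set.Ici (0:ℝ), Tendsto (fun t => h^[t] γ₀) atTop (nhds γs) := by
  obtain ⟨b, hb, hfb⟩ := hfeas
  -- Existence via IVT on f x = h x - x
  have hsub : Set.Icc (0:ℝ) b ⊆ Set.Ici 0 := fun x hx => hx.1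
  have hcont' : ContinuousOn (fun x => h x - x) (Set.Icc 0 b) :=
    (hcont.mono hsub).sub continuousOn_id
  have hiv := intermediate_value_Icc' hb.le hcont'
  have h0 : (0:ℝ) ∈ Set.Icc (h b - b) (h 0 - 0) := by
    constructor
    · linarith
    · have := hpos 0 Set.self_mem_Ici
      linarith
  obtain ⟨γs, hγsmem, hfix0⟩ := hiv h0
  have hfix : h γs = γs := by dsimp at hfix0; linarith
  have hγs0 : 0 ≤ γs := hγsmem.1
  have hγspos : 0 < γs := by
    have := hpos γs hγs0
    linarith [hfix]
  -- sign lemmas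
  have lt_h : ∀ x, 0 < x → x < γs → x < h x := by
    intro x hx hxlt
    have hα : 1 < γs / x := (one_lt_div hx).mpr hxlt
    have key := hscal (γs / x) hα x hx.le (hpos x hx.le)
    rw [div_mul_cancel₀ _ (ne_of_gt hx)] at key
    rw [hfix] at key
    have hhx := hpos x hx.le
    rw [div_mul_eq_mul_div, lt_div_iff₀ hx] at key
    nlinarith
  have h_lt : ∀ x, γs < x → h x < x := by
    intro x hxgt
    have hα : 1 < x / γs := (one_lt_div hγspos).mpr hxgt
    have key := hscal (x / γs) hα γs hγs0 (hpos γs hγs0)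
    rw [div_mul_cancel₀ _ (ne_of_gt hγspos), hfix] at key
    rwa [div_mul_cancel₀ _ (ne_of_gt hγspos)] at key
  -- uniqueness
  have huniq : ∀ γ' > (0:ℝ), h γ' = γ' → γ' = γs := by
    intro γ' hγ' hfix'
    rcases lt_trichotomy γ' γs with hlt | heq | hgt
    · exact absurd hfix' (by have := lt_h γ' hγ' hlt; linarith)
    · exact heq
    · exact absurd hfix' (by have := h_lt γ' hgt; linarith)
  refine ⟨γs, hγspos, hfix, huniq, ?_⟩
  intro γ₀ hγ₀
  have hnn : ∀ t, 0 ≤ h^[t] γ₀ := by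
    intro t
    induction t with
    | zero => exact hγ₀
    | succ n ih => rw [Function.iterate_succ_apply']; exact (hpos _ ih).le
  rcases le_or_gt γ₀ γs with hle | hgt
  · -- increasing case
    have hub : ∀ t, h^[t] γ₀ ≤ γs := by
      intro t
      induction t with
      | zero => exact hle
      | succ n ih =>
        rw [Function.iterate_succ_apply']
        calc h (h^[n] γ₀) ≤ h γs := hmono _ (hnn n) _ hγs0 ih
        _ = γs := hfix
    have hstep : ∀ x, 0 ≤ x → x ≤ γs → x ≤ h x := by
      intro x hx hxle
      rcases eq_or_lt_of_le hxle with rfl | hxlt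
      · exact hfix.ge
      · rcases eq_or_lt_of_le hx with rfl | hx'
        · exact (hpos 0 Set.self_mem_Ici).le
        · exact (lt_h x hx' hxlt).le
    have hmonoU : Monotone (fun t => h^[t] γ₀) := by
      apply monotone_nat_of_le_succ
      intro t
      rw [Function.iterate_succ_apply']
      exact hstep _ (hnn t) (hub t)
    have hbdd : BddAbove (Set.range fun t => h^[t] γ₀) := ⟨γs, by rintro x ⟨t, rfl⟩; exact hub t⟩
    have hlim := tendsto_atTop_ciSup hmonoU hbdd
    set L := ⨆ t, h^[t] γ₀ with hLdef
    have hLnn : 0 ≤ L := le_trans (hnn 0) (le_ciSup hbdd 0)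
    have hLfix : h L = L :=
      aux_fix_pt h hcont _ (fun t => Function.iterate_succ_apply' h t γ₀) hnn L hLnn hlim
    have hLpos : 0 < L := by
      have h1 : h^[1] γ₀ ≤ L := le_ciSup hbdd 1
      have : 0 < h^[1] γ₀ := by rw [Function.iterate_one]; exact hpos _ hγ₀
      linarith
    have := huniq L hLpos hLfix
    rwa [this] at hlim
  · -- decreasing case
    have hlb : ∀ t, γs ≤ h^[t] γ₀ := by
      intro t
      induction t with
      | zero => exact hgt.le
      | succ n ih =>
        rw [Function.iterate_succ_apply']
        calc γs = h γs := hfix.symm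
        _ ≤ h (h^[n] γ₀) := hmono _ hγs0 _ (hnn n) ih
    have hstep : ∀ x, γs ≤ x → h x ≤ x := by
      intro x hxge
      rcases eq_or_lt_of_le hxge with rfl | hxgt
      · exact hfix.le
      · exact (h_lt x hxgt).le
    have hantiU : Antitone (fun t => h^[t] γ₀) := by
      apply antitone_nat_of_succ_le
      intro t
      rw [Function.iterate_succ_apply']
      exact hstep _ (hlb t)
    have hbdd : BddBelow (Set.range fun t => h^[t] γ₀) := ⟨γs, by rintro x ⟨t, rfl⟩; exact hlb t⟩
    have hlim := tendsto_atTop_ciInf hantiU hbdd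
    set L := ⨅ t, h^[t] γ₀ with hLdef
    have hLpos : 0 < γs := hγspos
    have hLge : γs ≤ L := le_ciInf hlb
    have hLfix : h L = L :=
      aux_fix_pt h hcont _ (fun t => Function.iterate_succ_apply' h t γ₀) hnn L (by linarith) hlim
    have := huniq L (by linarith) hLfix
    rwa [this] at hlim
end

section
/- Let τ₁,…,τₙ ≥ 0, c ∈ (0,1), ψ as above, and suppose γ_N > 0 and γ_N^η > 0 satisfy 1 = (1/n)·Σ_{i=1}^n ψ(τᵢ·γ_N)/(1 + c·ψ(τᵢ·γ_N)) and 1 = (1/n)·Σ_{i ∈ S} ψ(τᵢ·γ_N^η)/(1 + c·ψ(τᵢ·γ_N^η)) for some subset S ⊆ {1,…,n}. Then γ_N ≤ γ_N^η. -/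
open Finset

/-- the solution of the S-restricted fixed-point equation
dominates the solution of the full one: γ_N ≤ γ_N^η. -/
theorem stmt_13 (n : ℕ) (τ : Fin n → ℝ) (hτ : ∀ i, 0 ≤ τ i)
    (c : ℝ) (hc0 : 0 < c) (hc1 : c < 1)
    (ψ : ℝ → ℝ) (hψmono : StrictMonoOn ψ (Set.Ici 0))
    (hψcont : ContinuousOn ψ (Set.Ici 0)) (hψ0 : ψ 0 = 0)
    (hψnonneg : ∀ x ∈ Set.Ici (0:ℝ), 0 ≤ ψ x)
    (S : Finset (Fin n)) (γN γNη : ℝ) (hγN : 0 < γN) (hγNη : 0 < γNη)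
    (heqN : 1 = (1 / (n:ℝ)) * ∑ i, ψ (τ i * γN) / (1 + c * ψ (τ i * γN)))
    (heqNη : 1 = (1 / (n:ℝ)) * ∑ i ∈ S, ψ (τ i * γNη) / (1 + c * ψ (τ i * γNη))) :
    γN ≤ γNη := by
  by_contra hcon
  push_neg at hcon
  have hn : (0:ℝ) < n := by
    rcases Nat.eq_zero_or_pos n with h | h
    · subst h; simp at heqN
    · exact_mod_cast h
  have hnne : (n:ℝ) ≠ 0 := ne_of_gt hn
  set f : ℝ → ℝ := fun x => ψ x / (1 + c * ψ x) with hf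
  have hden : ∀ x, 0 ≤ x → 0 < 1 + c * ψ x := by
    intro x hx
    have h1 := hψnonneg x hx
    nlinarith
  have hfnonneg : ∀ x, 0 ≤ x → 0 ≤ f x := by
    intro x hx
    exact div_nonneg (hψnonneg x hx) (hden x hx).le
  have hfle : ∀ a b, 0 ≤ a → a ≤ b → f a ≤ f b := by
    intro a b ha hab
    have hb : 0 ≤ b := ha.trans hab
    have hψab : ψ a ≤ ψ b := hψmono.monotoneOn ha hb hab
    have hψa := hψnonneg a ha
    simp only [hf]
    rw [div_le_div_iff₀ (hden a ha) (hden b hb)]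
    nlinarith
  have hflt : ∀ a b, 0 ≤ a → a < b → f a < f b := by
    intro a b ha hab
    have hb : 0 ≤ b := ha.trans hab.le
    have hψab : ψ a < ψ b := hψmono ha hb hab
    have hψa := hψnonneg a ha
    simp only [hf]
    rw [div_lt_div_iff₀ (hden a ha) (hden b hb)]
    nlinarith
  have hsumN : ∑ i, f (τ i * γN) = n := by
    have := heqN
    field_simp at this
    rw [this]; simp only [hf, mul_comm c]
  have hsumS : ∑ i ∈ S, f (τ i * γNη) = n := by
    have := heqNη
    field_simp at this
    rw [this]; simp only [hf, mul_comm c]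
  -- there exists an index with τ i > 0
  have hex : ∃ i : Fin n, 0 < τ i := by
    by_contra h
    push_neg at h
    have hτ0 : ∀ i, τ i = 0 := fun i => le_antisymm (h i) (hτ i)
    have : ∑ i, f (τ i * γN) = 0 := by
      apply Finset.sum_eq_zero
      intro i _
      simp [hf, hτ0 i, hψ0]
    rw [this] at hsumN
    linarith
  obtain ⟨j, hj⟩ := hex
  have hle1 : ∑ i ∈ S, f (τ i * γNη) ≤ ∑ i, f (τ i * γNη) := by
    apply Finset.sum_le_sum_of_subset_of_nonneg (Finset.subset_univ S)
    intro i _ _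
    exact hfnonneg _ (mul_nonneg (hτ i) hγNη.le)
  have hlt2 : ∑ i, f (τ i * γNη) < ∑ i, f (τ i * γN) := by
    apply Finset.sum_lt_sum
    · intro i _
      exact hfle _ _ (mul_nonneg (hτ i) hγNη.le)
        (mul_le_mul_of_nonneg_left hcon.le (hτ i))
    · exact ⟨j, Finset.mem_univ j,
        hflt _ _ (mul_nonneg (hτ j) hγNη.le)
          (by exact mul_lt_mul_of_pos_left hcon hj)⟩
  linarith [hsumN, hsumS, hle1, hlt2]
end

section
/- Let ψ, c, τᵢ, γ_N, γ_N^η, S be as in the previous statement with γ_N ≤ γ_N^η, and let ψ_∞ = sup ψ. Then (1/n)·Σ_{i ∉ S} ψ(τᵢ·γ_N)/(1 + c·ψ(τᵢ·γ_N)) = (1/n)·Σ_{i ∈ S} (ψ(τᵢ·γ_N^η) − ψ(τᵢ·γ_N)) / ((1 + c·ψ(τᵢ·γ_N))·(1 + c·ψ(τᵢ·γ_N^η))) and this quantity is at least (1/(1 + c·ψ_∞)²)·(1/n)·Σ_{i ∈ S} (ψ(τᵢ·γ_N^η) − ψ(τᵢ·γ_N)). -/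
open Finset

/-- identity and lower bound for the complementary sum. -/
theorem stmt_14 (n : ℕ) (τ : Fin n → ℝ) (hτ : ∀ i, 0 ≤ τ i)
    (c ψinf : ℝ) (hc : 0 < c)
    (ψ : ℝ → ℝ) (hψmono : StrictMonoOn ψ (Set.Ici 0)) (hψ0 : ψ 0 = 0)
    (hψnonneg : ∀ x ∈ Set.Ici (0:ℝ), 0 ≤ ψ x)
    (hψsup : IsLUB (ψ '' Set.Ici 0) ψinf)
    (S : Finset (Fin n)) (γN γNη : ℝ) (hγN : 0 < γN) (hγNη : 0 < γNη)
    (hle : γN ≤ γNη)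
    (heqN : 1 = (1 / (n:ℝ)) * ∑ i, ψ (τ i * γN) / (1 + c * ψ (τ i * γN)))
    (heqNη : 1 = (1 / (n:ℝ)) * ∑ i ∈ S, ψ (τ i * γNη) / (1 + c * ψ (τ i * γNη))) :
    (1 / (n:ℝ)) * ∑ i ∈ Sᶜ, ψ (τ i * γN) / (1 + c * ψ (τ i * γN))
        = (1 / (n:ℝ)) * ∑ i ∈ S, (ψ (τ i * γNη) - ψ (τ i * γN))
            / ((1 + c * ψ (τ i * γN)) * (1 + c * ψ (τ i * γNη))) ∧
      (1 / (n:ℝ)) * ∑ i ∈ Sᶜ, ψ (τ i * γN) / (1 + c * ψ (τ i * γN))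
        ≥ (1 / (1 + c * ψinf) ^ 2) *
            ((1 / (n:ℝ)) * ∑ i ∈ S, (ψ (τ i * γNη) - ψ (τ i * γN))) := by
  have ha : ∀ i, 0 ≤ ψ (τ i * γN) := fun i =>
    hψnonneg _ (mul_nonneg (hτ i) hγN.le)
  have hb : ∀ i, 0 ≤ ψ (τ i * γNη) := fun i =>
    hψnonneg _ (mul_nonneg (hτ i) hγNη.le)
  have hab : ∀ i, ψ (τ i * γN) ≤ ψ (τ i * γNη) := fun i =>
    hψmono.monotoneOn (mul_nonneg (hτ i) hγN.le) (mul_nonneg (hτ i) hγNη.le)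
      (mul_le_mul_of_nonneg_left hle (hτ i))
  have hda : ∀ i, 0 < 1 + c * ψ (τ i * γN) := fun i => by nlinarith [ha i, hc]
  have hdb : ∀ i, 0 < 1 + c * ψ (τ i * γNη) := fun i => by nlinarith [hb i, hc]
  have hsupa : ∀ i, ψ (τ i * γN) ≤ ψinf := fun i =>
    hψsup.1 ⟨_, mul_nonneg (hτ i) hγN.le, rfl⟩
  have hsupb : ∀ i, ψ (τ i * γNη) ≤ ψinf := fun i =>
    hψsup.1 ⟨_, mul_nonneg (hτ i) hγNη.le, rfl⟩
  have hinf0 : 0 ≤ ψinf := hψ0 ▸ hψsup.1 ⟨0, Set.mem_Ici.mpr le_rfl, rfl⟩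
  have hdinf : 0 < 1 + c * ψinf := by nlinarith
  -- the identity
  have hid : (1 / (n:ℝ)) * ∑ i ∈ Sᶜ, ψ (τ i * γN) / (1 + c * ψ (τ i * γN))
      = (1 / (n:ℝ)) * ∑ i ∈ S, (ψ (τ i * γNη) - ψ (τ i * γN))
          / ((1 + c * ψ (τ i * γN)) * (1 + c * ψ (τ i * γNη))) := by
    have hsplit : ∑ i ∈ Sᶜ, ψ (τ i * γN) / (1 + c * ψ (τ i * γN))
        = ∑ i, ψ (τ i * γN) / (1 + c * ψ (τ i * γN))
          - ∑ i ∈ S, ψ (τ i * γN) / (1 + c * ψ (τ i * γN)) := by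
      rw [eq_sub_iff_add_eq, Finset.sum_compl_add_sum]
    have hterm : ∀ i ∈ S, ψ (τ i * γNη) / (1 + c * ψ (τ i * γNη))
        - ψ (τ i * γN) / (1 + c * ψ (τ i * γN))
        = (ψ (τ i * γNη) - ψ (τ i * γN))
          / ((1 + c * ψ (τ i * γN)) * (1 + c * ψ (τ i * γNη))) := by
      intro i _
      have hA := (hda i).ne'
      have hB := (hdb i).ne'
      rw [div_sub_div _ _ hB hA]
      ring
    rw [hsplit, mul_sub, ← Finset.sum_congr rfl hterm, Finset.sum_sub_distrib,
      mul_sub, ← heqNη]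
    congr 1
    exact heqN.symm
  refine ⟨hid, ?_⟩
  rw [hid, ge_iff_le, mul_left_comm]
  have hn : (0:ℝ) ≤ 1 / (n:ℝ) := by positivity
  apply mul_le_mul_of_nonneg_left _ hn
  rw [Finset.mul_sum]
  apply Finset.sum_le_sum
  intro i _
  rw [div_mul_eq_mul_div, one_mul, div_le_div_iff₀ (pow_pos hdinf 2)
    (mul_pos (hda i) (hdb i))]
  have h1 : (1 + c * ψ (τ i * γN)) * (1 + c * ψ (τ i * γNη)) ≤ (1 + c * ψinf) ^ 2 := by
    rw [sq]
    exact mul_le_mul (by linarith [mul_le_mul_of_nonneg_left (hsupa i) hc.le])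
      (by linarith [mul_le_mul_of_nonneg_left (hsupb i) hc.le]) (hdb i).le hdinf.le
  calc (ψ (τ i * γNη) - ψ (τ i * γN)) * ((1 + c * ψ (τ i * γN)) * (1 + c * ψ (τ i * γNη)))
      ≤ (ψ (τ i * γNη) - ψ (τ i * γN)) * (1 + c * ψinf) ^ 2 :=
        mul_le_mul_of_nonneg_left h1 (by linarith [hab i])
end
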